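/- In the canonical game G(X₀), for any outcomes ω, ω' ∈ Ω with ω ∼_C ω' and any formula φ of Φ: K̄_C φ ∈ hd(ω) if and only if K̄_C φ ∈ hd(ω'). -/

import Mathlib

namespace DutyToWarn

/-- The language Φ: propositional variables, negation, implication,
distributed knowledge `K_C φ`, and second-order blameworthiness `B_C^D φ`. -/
inductive Formula (Agent V : Type) : Type
  | var : V → Formula Agent V
  | neg : Formula Agent V → Formula Agent V
  | imp : Formula Agent V → Formula Agent V → Formula Agent V
  | know : Set Agent → Formula Agent V → Formula Agent V
  | blame : Set Agent → Set Agent → Formula Agent V → Formula Agent V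

variable {Agent V B : Type}

namespace Formula

/-- φ ∨ ψ is defined through ¬ and → in the usual way: ¬φ → ψ. -/
def disj (φ ψ : Formula Agent V) : Formula Agent V := imp (neg φ) ψ

/-- φ ∧ ψ is defined through ¬ and → in the usual way: ¬(φ → ¬ψ). -/
def conj (φ ψ : Formula Agent V) : Formula Agent V := neg (imp φ (neg ψ))

/-- φ ↔ ψ is defined as (φ → ψ) ∧ (ψ → φ). -/
def biimp (φ ψ : Formula Agent V) : Formula Agent V := conj (imp φ ψ) (imp ψ φ)

/-- K̄_C φ abbreviates ¬ K_C ¬ φ. -/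
def dknow (C : Set Agent) (φ : Formula Agent V) : Formula Agent V := neg (know C (neg φ))

end Formula

/-- The Boolean constant ⊥, defined through ¬ and →. -/
def falsum [Inhabited V] : Formula Agent V :=
  Formula.neg (Formula.imp (Formula.var default) (Formula.var default))

/-- The disjunction χ₁ ∨ … ∨ χₙ of a list of formulas; for n = 0 it is ⊥. -/
def bigOr [Inhabited V] : List (Formula Agent V) → Formula Agent V
  | [] => falsum
  | [φ] => φ
  | φ :: ψ :: l => φ.disj (bigOr (ψ :: l))

/-- A propositional valuation: any assignment of truth values to formulas
that respects negation and implication (treating K- and B-formulas as atoms). -/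
def IsPropValuation (v : Formula Agent V → Prop) : Prop :=
  (∀ φ : Formula Agent V, v φ.neg ↔ ¬ v φ) ∧
    ∀ φ ψ : Formula Agent V, v (φ.imp ψ) ↔ (v φ → v ψ)

/-- A propositional tautology in the language Φ. -/
def Tautology (φ : Formula Agent V) : Prop :=
  ∀ v : Formula Agent V → Prop, IsPropValuation v → v φ

/-- ⊢ φ : provability from the axioms using Modus Ponens and Necessitation. -/
inductive Provable : Formula Agent V → Prop
  | taut {φ : Formula Agent V} : Tautology φ → Provable φ
  | truthK {C : Set Agent} {φ : Formula Agent V} :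
      Provable ((Formula.know C φ).imp φ)
  | truthB {C D : Set Agent} {φ : Formula Agent V} :
      Provable ((Formula.blame C D φ).imp φ)
  | distr {C : Set Agent} {φ ψ : Formula Agent V} :
      Provable ((Formula.know C (φ.imp ψ)).imp ((Formula.know C φ).imp (Formula.know C ψ)))
  | negIntro {C : Set Agent} {φ : Formula Agent V} :
      Provable ((Formula.know C φ).neg.imp (Formula.know C (Formula.know C φ).neg))
  | monoK {C E : Set Agent} {φ : Formula Agent V} (h : C ⊆ E) :
      Provable ((Formula.know C φ).imp (Formula.know E φ))
  | monoB {C D E F : Set Agent} {φ : Formula Agent V} (h1 : C ⊆ E) (h2 : D ⊆ F) :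
      Provable ((Formula.blame C D φ).imp (Formula.blame E F φ))
  | noneToAct {C : Set Agent} {φ : Formula Agent V} :
      Provable (Formula.neg (Formula.blame C ∅ φ))
  | jointResp {C D E F : Set Agent} {φ ψ : Formula Agent V} (h : D ∩ F = ∅) :
      Provable (((Formula.dknow C (Formula.blame C D φ)).conj
        (Formula.dknow E (Formula.blame E F ψ))).imp
        ((φ.disj ψ).imp (Formula.blame (C ∪ E) (D ∪ F) (φ.disj ψ))))
  | strictCond {C D : Set Agent} {φ ψ : Formula Agent V} :
      Provable ((Formula.know C (φ.imp ψ)).imp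
        ((Formula.blame C D ψ).imp (φ.imp (Formula.blame C D φ))))
  | introB {C D : Set Agent} {φ : Formula Agent V} :
      Provable ((Formula.blame C D φ).imp (Formula.know C (φ.imp (Formula.blame C D φ))))
  | mp {φ ψ : Formula Agent V} : Provable (φ.imp ψ) → Provable φ → Provable ψ
  | nec {C : Set Agent} {φ : Formula Agent V} : Provable φ → Provable (Formula.know C φ)

/-- X ⊢ φ : provability from the theorems of the system together with the
additional hypotheses X, using only Modus Ponens. -/
inductive ProvableFrom (X : Set (Formula Agent V)) : Formula Agent V → Prop
  | hyp {φ : Formula Agent V} (h : φ ∈ X) : ProvableFrom X φ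
  | thm {φ : Formula Agent V} (h : Provable φ) : ProvableFrom X φ
  | mp {φ ψ : Formula Agent V} (h1 : ProvableFrom X (φ.imp ψ)) (h2 : ProvableFrom X φ) :
      ProvableFrom X ψ

/-- A game (Definition 1). -/
structure Game (Agent V : Type) where
  I : Type
  Δ : Type
  Ω : Type
  sim : Agent → I → I → Prop
  sim_equiv : ∀ a : Agent, Equivalence (sim a)
  P : Set (I × (Agent → Δ) × Ω)
  play_exists : ∀ (α : I) (δ : Agent → Δ), ∃ ω : Ω, (α, δ, ω) ∈ P
  π : V → Set (I × (Agent → Δ) × Ω)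
  π_sub : ∀ p : V, π p ⊆ P

/-- α ∼_C α' : indistinguishability by a coalition. -/
def Game.simC (G : Game Agent V) (C : Set Agent) (α α' : G.I) : Prop :=
  ∀ a ∈ C, G.sim a α α'

/-- Satisfiability (α,δ,ω) ⊩ φ (Definition 2). -/
def Game.Sat (G : Game Agent V) :
    Formula Agent V → (G.I × (Agent → G.Δ) × G.Ω) → Prop
  | Formula.var p, x => x ∈ G.π p
  | Formula.neg φ, x => ¬ G.Sat φ x
  | Formula.imp φ ψ, x => G.Sat φ x → G.Sat ψ x
  | Formula.know C φ, x => ∀ x' ∈ G.P, G.simC C x.1 x'.1 → G.Sat φ x'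
  | Formula.blame C D φ, x => G.Sat φ x ∧
      ∃ s : Agent → G.Δ, ∀ x' ∈ G.P, G.simC C x.1 x'.1 →
        (∀ a ∈ D, s a = x'.2.1 a) → ¬ G.Sat φ x'

/-- A set of formulas is consistent if no contradiction is derivable from it. -/
def Consistent (X : Set (Formula Agent V)) : Prop :=
  ¬ ∃ φ : Formula Agent V, ProvableFrom X φ ∧ ProvableFrom X φ.neg

/-- A maximal consistent set: consistent with no proper consistent extension. -/
def MaxConsistent (X : Set (Formula Agent V)) : Prop :=
  Consistent X ∧ ∀ Y : Set (Formula Agent V), X ⊆ Y → Consistent Y → Y = X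

/-- One step (Cᵢ,bᵢ),Xᵢ of a sequence in the set of outcomes of the canonical game. -/
abbrev Step (Agent V B : Type) : Type := Set Agent × B × Set (Formula Agent V)

/-- Validity of a sequence X₀,(C₁,b₁),X₁,…,(Cₙ,bₙ),Xₙ : each Xᵢ is maximal
consistent and {φ | K_{Cᵢ} φ ∈ X_{i-1}} ⊆ Xᵢ. -/
def ValidSeq (X₀ : Set (Formula Agent V)) : List (Step Agent V B) → Prop
  | [] => True
  | (C, _, X) :: l =>
      MaxConsistent X ∧ (∀ φ : Formula Agent V, Formula.know C φ ∈ X₀ → φ ∈ X) ∧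
        ValidSeq X l

/-- The set Ω of outcomes of the canonical game G(X₀): valid sequences starting at X₀
(the sequence of steps after X₀ is recorded). -/
def COutcome (X₀ : Set (Formula Agent V)) (B : Type) : Type :=
  {l : List (Step Agent V B) // ValidSeq X₀ l}

/-- The last maximal consistent set of a sequence. -/
def hdSeq (X₀ : Set (Formula Agent V)) : List (Step Agent V B) → Set (Formula Agent V)
  | [] => X₀
  | (_, _, X) :: l => hdSeq X l

/-- hd(ω) : the last maximal consistent set of the outcome ω. -/
def chd {X₀ : Set (Formula Agent V)} (ω : COutcome X₀ B) : Set (Formula Agent V) :=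
  hdSeq X₀ ω.1

/-- ω ∼_a ω' in the Tree of Knowledge: all edges along the unique path between
ω and ω' are labeled with agent a, i.e. there is a common ancestor w such that
every edge from w down to ω and from w down to ω' is labeled with a. -/
def csimA {X₀ : Set (Formula Agent V)} (a : Agent) (u v : COutcome X₀ B) : Prop :=
  ∃ w t t' : List (Step Agent V B),
    u.1 = w ++ t ∧ v.1 = w ++ t' ∧ (∀ s ∈ t, a ∈ s.1) ∧ (∀ s ∈ t', a ∈ s.1)

/-- ω ∼_C ω' iff ω ∼_a ω' for each a ∈ C. -/
def csimC {X₀ : Set (Formula Agent V)} (C : Set Agent) (u v : COutcome X₀ B) : Prop :=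
  ∀ a ∈ C, csimA a u v

/-- The relation ∼_𝒜 on outcomes. -/
def crel (X₀ : Set (Formula Agent V)) (B : Type) : COutcome X₀ B → COutcome X₀ B → Prop :=
  csimC (Set.univ : Set Agent)

/-- The set I of initial states of the canonical game: I = Ω/∼_𝒜. -/
def CI (X₀ : Set (Formula Agent V)) (B : Type) : Type :=
  Quot (crel X₀ B)

/-- The equivalence class of an outcome. -/
def ctoI {X₀ : Set (Formula Agent V)} (u : COutcome X₀ B) : CI X₀ B :=
  Quot.mk (crel X₀ B) u

/-- The relation α ∼_C α' on I, induced on representatives. -/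
def IsimC {X₀ : Set (Formula Agent V)} (C : Set Agent) (α α' : CI X₀ B) : Prop :=
  ∃ u v : COutcome X₀ B, ctoI u = α ∧ ctoI v = α' ∧ csimC C u v

/-- The domain of actions of the canonical game: Δ = {(φ,C,ω)}. -/
abbrev CAct (X₀ : Set (Formula Agent V)) (B : Type) : Type :=
  Formula Agent V × Set Agent × COutcome X₀ B

/-- Triples (α, δ, ω) over the canonical game. -/
abbrev CPlay (X₀ : Set (Formula Agent V)) (B : Type) : Type :=
  CI X₀ B × (Agent → CAct X₀ B) × COutcome X₀ B

/-- The set P of plays of the canonical game (Definition 13). -/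
def CP (X₀ : Set (Formula Agent V)) (B : Type) : Set (CPlay X₀ B) :=
  {x | ctoI x.2.2 = x.1 ∧
    ∀ (v : COutcome X₀ B) (C D : Set Agent) (ψ : Formula Agent V),
      Formula.dknow C (Formula.blame C D ψ) ∈ chd v →
      (∀ a ∈ D, x.2.1 a = (ψ, C, v)) →
      csimC C x.2.2 v →
      Formula.neg ψ ∈ chd x.2.2}

/-- π(p) in the canonical game. -/
def Cπ (X₀ : Set (Formula Agent V)) (B : Type) (p : V) : Set (CPlay X₀ B) :=
  {x | x ∈ CP X₀ B ∧ Formula.var p ∈ chd x.2.2}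

/-- Satisfiability in the canonical game G(X₀) (Definition 2 instantiated). -/
def CSat (X₀ : Set (Formula Agent V)) (B : Type) :
    Formula Agent V → CPlay X₀ B → Prop
  | Formula.var p, x => x ∈ Cπ X₀ B p
  | Formula.neg φ, x => ¬ CSat X₀ B φ x
  | Formula.imp φ ψ, x => CSat X₀ B φ x → CSat X₀ B ψ x
  | Formula.know C φ, x => ∀ x' ∈ CP X₀ B, IsimC C x.1 x'.1 → CSat X₀ B φ x'
  | Formula.blame C D φ, x => CSat X₀ B φ x ∧
      ∃ s : Agent → CAct X₀ B, ∀ x' ∈ CP X₀ B, IsimC C x.1 x'.1 →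
        (∀ a ∈ D, s a = x'.2.1 a) → ¬ CSat X₀ B φ x'

section Aux

variable {Agent V B : Type}

/-- Deduction theorem for `ProvableFrom`. -/
lemma deduction {X : Set (Formula Agent V)} {φ ψ : Formula Agent V}
    (h : ProvableFrom (insert φ X) ψ) : ProvableFrom X (φ.imp ψ) := by
  induction h with
  | hyp hmem =>
    rcases hmem with h' | h'
    · subst h'
      exact ProvableFrom.thm (Provable.taut (by
        intro v hv; obtain ⟨hn, hi⟩ := hv; simp only [hi]; tauto))
    · exact ProvableFrom.mp
        (ProvableFrom.thm (Provable.taut (by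
          intro v hv; obtain ⟨hn, hi⟩ := hv; simp only [hi]; tauto)))
        (ProvableFrom.hyp h')
  | thm h' =>
    exact ProvableFrom.mp
      (ProvableFrom.thm (Provable.taut (by
        intro v hv; obtain ⟨hn, hi⟩ := hv; simp only [hi]; tauto)))
      (ProvableFrom.thm h')
  | mp h1 h2 ih1 ih2 =>
    exact ProvableFrom.mp
      (ProvableFrom.mp
        (ProvableFrom.thm (Provable.taut (by
          intro v hv; obtain ⟨hn, hi⟩ := hv; simp only [hi]; tauto)))
        ih1)
      ih2

/-- A maximal consistent set contains everything provable from it. -/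
lemma mem_of_provableFrom {X : Set (Formula Agent V)} (hX : MaxConsistent X)
    {φ : Formula Agent V} (h : ProvableFrom X φ) : φ ∈ X := by
  have hcons : Consistent (insert φ X) := by
    rintro ⟨ψ, h1, h2⟩
    exact hX.1 ⟨ψ, ProvableFrom.mp (deduction h1) h,
      ProvableFrom.mp (deduction h2) h⟩
  have := hX.2 (insert φ X) (Set.subset_insert _ _) hcons
  rw [← this]; exact Set.mem_insert _ _

lemma mem_of_thm {X : Set (Formula Agent V)} (hX : MaxConsistent X)
    {φ : Formula Agent V} (h : Provable φ) : φ ∈ X :=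
  mem_of_provableFrom hX (ProvableFrom.thm h)

lemma mcs_mp {X : Set (Formula Agent V)} (hX : MaxConsistent X)
    {φ ψ : Formula Agent V} (h1 : φ.imp ψ ∈ X) (h2 : φ ∈ X) : ψ ∈ X :=
  mem_of_provableFrom hX (ProvableFrom.mp (ProvableFrom.hyp h1) (ProvableFrom.hyp h2))

/-- Negation completeness of maximal consistent sets. -/
lemma neg_mem_iff {X : Set (Formula Agent V)} (hX : MaxConsistent X)
    {φ : Formula Agent V} : φ.neg ∈ X ↔ φ ∉ X := by
  constructor
  · intro h1 h2
    exact hX.1 ⟨φ, ProvableFrom.hyp h2, ProvableFrom.hyp h1⟩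
  · intro hnot
    have hcons : Consistent (insert φ.neg X) := by
      rintro ⟨ψ, h1, h2⟩
      have d1 := deduction h1
      have d2 := deduction h2
      have : ProvableFrom X φ := by
        refine ProvableFrom.mp (ProvableFrom.mp
          (ProvableFrom.thm (Provable.taut (φ := (φ.neg.imp ψ).imp ((φ.neg.imp ψ.neg).imp φ)) (by
            intro v hv; obtain ⟨hn, hi⟩ := hv; simp only [hi, hn]; tauto))) d1) d2
      exact hnot (mem_of_provableFrom hX this)
    have := hX.2 (insert φ.neg X) (Set.subset_insert _ _) hcons
    rw [← this]; exact Set.mem_insert _ _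

lemma imp_trans {a b c : Formula Agent V}
    (h1 : Provable (a.imp b)) (h2 : Provable (b.imp c)) : Provable (a.imp c) := by
  have t : Provable ((a.imp b).imp ((b.imp c).imp (a.imp c))) :=
    Provable.taut (by intro v hv; obtain ⟨hn, hi⟩ := hv; simp only [hi]; tauto)
  exact Provable.mp (Provable.mp t h1) h2

/-- Positive introspection is derivable (S5). -/
lemma pos_intro {C : Set Agent} {ψ : Formula Agent V} :
    Provable ((Formula.know C ψ).imp (Formula.know C (Formula.know C ψ))) := by
  -- h2 : K¬Kψ → ¬Kψ  (truth)
  have h2 : Provable ((Formula.know C (Formula.know C ψ).neg).imp (Formula.know C ψ).neg) :=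
    Provable.truthK
  -- h3 : Kψ → ¬K¬Kψ
  have h3 : Provable ((Formula.know C ψ).imp (Formula.know C (Formula.know C ψ).neg).neg) := by
    have t : Provable (((Formula.know C (Formula.know C ψ).neg).imp (Formula.know C ψ).neg).imp
        ((Formula.know C ψ).imp (Formula.know C (Formula.know C ψ).neg).neg)) :=
      Provable.taut (by intro v hv; obtain ⟨hn, hi⟩ := hv; simp only [hi, hn]; tauto)
    exact Provable.mp t h2
  -- h4 : ¬K¬Kψ → K¬K¬Kψ  (negative introspection)
  have h4 : Provable ((Formula.know C (Formula.know C ψ).neg).neg.imp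
      (Formula.know C (Formula.know C (Formula.know C ψ).neg).neg)) :=
    Provable.negIntro
  have h5 := imp_trans h3 h4
  -- h6 : ¬K¬Kψ → Kψ  (contrapositive of negative introspection)
  have h1 : Provable ((Formula.know C ψ).neg.imp (Formula.know C (Formula.know C ψ).neg)) :=
    Provable.negIntro
  have h6 : Provable ((Formula.know C (Formula.know C ψ).neg).neg.imp (Formula.know C ψ)) := by
    have t : Provable (((Formula.know C ψ).neg.imp (Formula.know C (Formula.know C ψ).neg)).imp
        ((Formula.know C (Formula.know C ψ).neg).neg.imp (Formula.know C ψ))) :=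
      Provable.taut (by intro v hv; obtain ⟨hn, hi⟩ := hv; simp only [hi, hn]; tauto)
    exact Provable.mp t h1
  have h7 : Provable (Formula.know C
      (((Formula.know C (Formula.know C ψ).neg).neg).imp (Formula.know C ψ))) :=
    Provable.nec h6
  have h8 := Provable.mp Provable.distr h7
  exact imp_trans h5 h8

/-- Transfer of `know C` formulas across one edge of the tree. -/
lemma know_transfer {X Y : Set (Formula Agent V)} (hX : MaxConsistent X)
    (hY : MaxConsistent Y) {C C' : Set Agent} (hCC : C ⊆ C')
    (hsub : ∀ ψ : Formula Agent V, Formula.know C' ψ ∈ X → ψ ∈ Y)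
    (ψ : Formula Agent V) : Formula.know C ψ ∈ X ↔ Formula.know C ψ ∈ Y := by
  constructor
  · intro hmem
    have h1 : Formula.know C (Formula.know C ψ) ∈ X :=
      mcs_mp hX (mem_of_thm hX pos_intro) hmem
    have h2 : Formula.know C' (Formula.know C ψ) ∈ X :=
      mcs_mp hX (mem_of_thm hX (Provable.monoK hCC)) h1
    exact hsub _ h2
  · intro hmem
    by_contra hnot
    have hneg : (Formula.know C ψ).neg ∈ X := (neg_mem_iff hX).2 hnot
    have h1 : Formula.know C (Formula.know C ψ).neg ∈ X :=
      mcs_mp hX (mem_of_thm hX Provable.negIntro) hneg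
    have h2 : Formula.know C' (Formula.know C ψ).neg ∈ X :=
      mcs_mp hX (mem_of_thm hX (Provable.monoK hCC)) h1
    have h3 : (Formula.know C ψ).neg ∈ Y := hsub _ h2
    exact (neg_mem_iff hY).1 h3 hmem

lemma dknow_transfer {X Y : Set (Formula Agent V)} (hX : MaxConsistent X)
    (hY : MaxConsistent Y) {C C' : Set Agent} (hCC : C ⊆ C')
    (hsub : ∀ ψ : Formula Agent V, Formula.know C' ψ ∈ X → ψ ∈ Y)
    (φ : Formula Agent V) : Formula.dknow C φ ∈ X ↔ Formula.dknow C φ ∈ Y := by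
  unfold Formula.dknow
  rw [neg_mem_iff hX, neg_mem_iff hY, know_transfer hX hY hCC hsub]

lemma hdSeq_append (X : Set (Formula Agent V)) (w t : List (Step Agent V B)) :
    hdSeq X (w ++ t) = hdSeq (hdSeq X w) t := by
  induction w generalizing X with
  | nil => rfl
  | cons s l ih => obtain ⟨_, _, Y⟩ := s; simp only [List.cons_append, hdSeq]; exact ih Y

lemma validSeq_append {X : Set (Formula Agent V)} {w t : List (Step Agent V B)}
    (h : ValidSeq X (w ++ t)) : ValidSeq X w ∧ ValidSeq (hdSeq X w) t := by
  induction w generalizing X with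
  | nil => exact ⟨trivial, h⟩
  | cons s l ih =>
    obtain ⟨Cs, b, Y⟩ := s
    obtain ⟨h1, h2, h3⟩ := h
    obtain ⟨h4, h5⟩ := ih h3
    exact ⟨⟨h1, h2, h4⟩, h5⟩

lemma mcs_hdSeq {X : Set (Formula Agent V)} (hX : MaxConsistent X)
    {t : List (Step Agent V B)} (h : ValidSeq X t) : MaxConsistent (hdSeq X t) := by
  induction t generalizing X with
  | nil => exact hX
  | cons s l ih =>
    obtain ⟨Cs, b, Y⟩ := s
    obtain ⟨h1, _, h3⟩ := h
    exact ih h1 h3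

/-- Transfer of `dknow C` along a path all of whose edges are labeled by C. -/
lemma path_transfer {C : Set Agent} (φ : Formula Agent V) :
    ∀ (t : List (Step Agent V B)) (X : Set (Formula Agent V)), MaxConsistent X →
      ValidSeq X t → (∀ s ∈ t, C ⊆ s.1) →
      (Formula.dknow C φ ∈ X ↔ Formula.dknow C φ ∈ hdSeq X t) := by
  intro t
  induction t with
  | nil => intro X _ _ _; rfl
  | cons s l ih =>
    obtain ⟨Cs, b, Y⟩ := s
    intro X hX hv hlab
    obtain ⟨hY, hsub, hl⟩ := hv
    have hCCs : C ⊆ Cs := hlab (Cs, b, Y) List.mem_cons_self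
    have h1 := dknow_transfer hX hY hCCs hsub φ
    have h2 := ih Y hY hl (fun s hs => hlab s (List.mem_cons_of_mem _ hs))
    exact h1.trans h2

end Aux

/-- Corollary 1: in the canonical game G(X₀),
    if ω ∼_C ω' then K̄_C φ ∈ hd(ω) iff K̄_C φ ∈ hd(ω'). -/
theorem transport_dknow {Agent V B : Type}
    (hB : Cardinal.mk Agent < Cardinal.mk B)
    (X₀ : Set (Formula Agent V)) (hX₀ : MaxConsistent X₀)
    (C : Set Agent) (ω ω' : COutcome X₀ B) (h : csimC C ω ω')
    (φ : Formula Agent V) :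
    Formula.dknow C φ ∈ chd ω ↔ Formula.dknow C φ ∈ chd ω' := by
  classical
  obtain ⟨w, t, t', hw, hw', ht, ht'⟩ : ∃ w t t' : List (Step Agent V B),
      ω.1 = w ++ t ∧ ω'.1 = w ++ t' ∧ (∀ s ∈ t, C ⊆ s.1) ∧ (∀ s ∈ t', C ⊆ s.1) := by
    by_cases hC : C.Nonempty
    · obtain ⟨a₀, ha₀⟩ := hC
      have hch : ∀ a : {x // x ∈ C}, ∃ w t t' : List (Step Agent V B),
          ω.1 = w ++ t ∧ ω'.1 = w ++ t' ∧ (∀ s ∈ t, (a : Agent) ∈ s.1) ∧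
          (∀ s ∈ t', (a : Agent) ∈ s.1) := fun a => h a a.2
      choose W T T' hW hW' hT hT' using hch
      set S : Set ℕ := Set.range (fun a => (W a).length) with hS
      have hSne : S.Nonempty := ⟨(W ⟨a₀, ha₀⟩).length, ⟨⟨a₀, ha₀⟩, rfl⟩⟩
      have hSbdd : BddAbove S := by
        refine ⟨ω.1.length, ?_⟩
        rintro n ⟨a, rfl⟩
        rw [hW a]
        simp
      obtain ⟨amax, hamax⟩ := Nat.sSup_mem hSne hSbdd
      have hamax' : (W amax).length = sSup S := hamax
      refine ⟨W amax, T amax, T' amax, hW amax, hW' amax, ?_, ?_⟩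
      · intro s hs a ha
        have hle : (W ⟨a, ha⟩).length ≤ (W amax).length := by
          rw [hamax']; exact le_csSup hSbdd ⟨⟨a, ha⟩, rfl⟩
        have hpre : W ⟨a, ha⟩ <+: W amax :=
          List.prefix_of_prefix_length_le ⟨T ⟨a, ha⟩, (hW ⟨a, ha⟩).symm⟩
            ⟨T amax, (hW amax).symm⟩ hle
        obtain ⟨u, hu⟩ := hpre
        have : T ⟨a, ha⟩ = u ++ T amax := by
          have h1 := (hW ⟨a, ha⟩).symm.trans (hW amax)
          rw [← hu, List.append_assoc] at h1
          exact (List.append_cancel_left h1)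
        exact hT ⟨a, ha⟩ s (by rw [this]; exact List.mem_append_right u hs)
      · intro s hs a ha
        have hle : (W ⟨a, ha⟩).length ≤ (W amax).length := by
          rw [hamax']; exact le_csSup hSbdd ⟨⟨a, ha⟩, rfl⟩
        have hpre : W ⟨a, ha⟩ <+: W amax :=
          List.prefix_of_prefix_length_le ⟨T ⟨a, ha⟩, (hW ⟨a, ha⟩).symm⟩
            ⟨T amax, (hW amax).symm⟩ hle
        obtain ⟨u, hu⟩ := hpre
        have : T' ⟨a, ha⟩ = u ++ T' amax := by
          have h1 := (hW' ⟨a, ha⟩).symm.trans (hW' amax)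
          rw [← hu, List.append_assoc] at h1
          exact (List.append_cancel_left h1)
        exact hT' ⟨a, ha⟩ s (by rw [this]; exact List.mem_append_right u hs)
    · exact ⟨[], ω.1, ω'.1, rfl, rfl,
        fun s _ a ha => absurd ⟨a, ha⟩ hC, fun s _ a ha => absurd ⟨a, ha⟩ hC⟩
  have hv := ω.2
  have hv' := ω'.2
  rw [hw] at hv
  rw [hw'] at hv'
  obtain ⟨hvw, hvt⟩ := validSeq_append hv
  obtain ⟨_, hvt'⟩ := validSeq_append hv'
  have hMw : MaxConsistent (hdSeq X₀ w) := mcs_hdSeq hX₀ hvw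
  have e1 : chd ω = hdSeq (hdSeq X₀ w) t := by
    unfold chd; rw [hw, hdSeq_append]
  have e2 : chd ω' = hdSeq (hdSeq X₀ w) t' := by
    unfold chd; rw [hw', hdSeq_append]
  rw [e1, e2]
  exact (path_transfer φ t (hdSeq X₀ w) hMw hvt ht).symm.trans
    (path_transfer φ t' (hdSeq X₀ w) hMw hvt' ht')

end DutyToWarn
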